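/- Let f : [a, b] → ℝ be continuous and suppose that for every t ∈ (a, b) and every C¹ function ψ that is a supertangent to f at t (i.e. ψ(t) = f(t) and f − ψ has a local maximum at t), one has ψ'(t) ≤ 0. Then f is nonincreasing on [a, b]. -/

import Mathlib

open Set Filter

/-- a continuous function on `[a, b]` whose C¹ supertangents at interior
points all have nonpositive derivative is nonincreasing on `[a, b]`. -/
theorem nonincreasing_of_supertangents (a b : ℝ) (hab : a < b) (f : ℝ → ℝ)
    (hf : ContinuousOn f (Icc a b))
    (hsup : ∀ t ∈ Ioo a b, ∀ ψ : ℝ → ℝ, ContDiff ℝ 1 ψ → ψ t = f t →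
      IsLocalMax (fun τ => f τ - ψ τ) t → deriv ψ t ≤ 0) :
    AntitoneOn f (Icc a b) := by
  have key : ∀ x ∈ Icc a b, ∀ y ∈ Icc a b, x < y → y < b → f y ≤ f x := by
    intro x hx y hy hxy hyb
    by_contra hlt
    push_neg at hlt
    -- slope
    set m : ℝ := (f y - f x) / (2 * (y - x)) with hm
    have hyx : 0 < y - x := by linarith
    have hfd : 0 < f y - f x := by linarith
    have hm0 : 0 < m := by positivity
    have hmyx : m * (y - x) = (f y - f x) / 2 := by
      rw [hm, div_mul_eq_mul_div, div_eq_div_iff (mul_pos two_pos hyx).ne' two_ne_zero]; ring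
    set K : ℝ := (f y - f x) / 4 with hK
    have hK0 : 0 < K := by positivity
    set R : ℝ := f b - f x - m * (b - x) with hR
    have hby : 0 < b - y := by linarith
    set s : ℝ := (|R| + 1) / (K * (b - y)) with hs
    have hs0 : 0 < s := by positivity
    set g : ℝ → ℝ := fun t => f t - f x - m * (t - x) - K * Real.exp (s * (t - y))
      with hg
    have hgx : g x < 0 := by
      have : (0:ℝ) < K * Real.exp (s * (x - y)) := by positivity
      simp only [hg]
      nlinarith [this]
    have hgy : 0 < g y := by
      simp only [hg, sub_self, mul_zero, Real.exp_zero, mul_one]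
      rw [hmyx]
      simp only [hK]
      linarith
    have hgb : g b < 0 := by
      have hexp : s * (b - y) + 1 ≤ Real.exp (s * (b - y)) := Real.add_one_le_exp _
      have h1 : K * (s * (b - y)) = |R| + 1 := by
        calc K * (s * (b - y)) = s * (K * (b - y)) := by ring
          _ = |R| + 1 := div_mul_cancel₀ (|R| + 1) (mul_pos hK0 hby).ne'
      have h2 : |R| + 1 + K ≤ K * Real.exp (s * (b - y)) := by
        calc |R| + 1 + K = K * (s * (b - y)) + K := by rw [h1]
          _ = K * (s * (b - y) + 1) := by ring
          _ ≤ K * Real.exp (s * (b - y)) := by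
              exact mul_le_mul_of_nonneg_left hexp hK0.le
      have hRle : R ≤ |R| := le_abs_self R
      simp only [hg]
      have : f b - f x - m * (b - x) = R := rfl
      nlinarith
    -- maximize g on [x, b]
    have hxb : x ≤ b := by linarith
    have hsub : Icc x b ⊆ Icc a b := Icc_subset_Icc hx.1 le_rfl
    have hgc : ContinuousOn g (Icc x b) := by
      apply ContinuousOn.sub
      apply ContinuousOn.sub
      apply ContinuousOn.sub
      · exact hf.mono hsub
      · exact continuousOn_const
      · exact (continuous_const.mul (continuous_id.sub continuous_const)).continuousOn
      · exact (continuous_const.mul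
          ((continuous_const.mul (continuous_id.sub continuous_const)).rexp)).continuousOn
    obtain ⟨t₀, ht₀, hmax⟩ := isCompact_Icc.exists_isMaxOn (nonempty_Icc.mpr hxb) hgc
    have hyI : y ∈ Icc x b := ⟨hxy.le, hyb.le⟩
    have hgt0 : 0 < g t₀ := lt_of_lt_of_le hgy (hmax hyI)
    have ht0x : x < t₀ := by
      rcases lt_or_eq_of_le ht₀.1 with h | h
      · exact h
      · exfalso; rw [← h] at hgt0; linarith
    have ht0b : t₀ < b := by
      rcases lt_or_eq_of_le ht₀.2 with h | h
      · exact h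
      · exfalso; rw [h] at hgt0; linarith
    -- the supertangent
    set ψ : ℝ → ℝ := fun τ => f t₀ + m * (τ - t₀) +
      K * (Real.exp (s * (τ - y)) - Real.exp (s * (t₀ - y))) with hψ
    have hψc : ContDiff ℝ 1 ψ := by
      apply ContDiff.add
      apply ContDiff.add
      · exact contDiff_const
      · exact contDiff_const.mul (contDiff_id.sub contDiff_const)
      · exact contDiff_const.mul
          (((contDiff_const.mul (contDiff_id.sub contDiff_const)).exp).sub contDiff_const)
    have hψt : ψ t₀ = f t₀ := by simp [hψ]
    have hdiff : ∀ τ, f τ - ψ τ = g τ - g t₀ := by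
      intro τ; simp only [hψ, hg]; ring
    have hloc : IsLocalMax (fun τ => f τ - ψ τ) t₀ := by
      have hmem : Icc x b ∈ nhds t₀ := Icc_mem_nhds ht0x ht0b
      have hev : ∀ᶠ τ in nhds t₀, g τ ≤ g t₀ := hmax.isLocalMax hmem
      unfold IsLocalMax IsMaxFilter
      filter_upwards [hev] with τ hτ
      have h1 := hdiff τ
      have h2 := hdiff t₀
      linarith
    have hderiv : HasDerivAt ψ (m + K * (Real.exp (s * (t₀ - y)) * s)) t₀ := by
      have h1 : HasDerivAt (fun τ : ℝ => m * (τ - t₀)) m t₀ := by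
        simpa using ((hasDerivAt_id t₀).sub_const t₀).const_mul m
      have h2 : HasDerivAt (fun τ : ℝ => s * (τ - y)) s t₀ := by
        simpa using ((hasDerivAt_id t₀).sub_const y).const_mul s
      have h3 : HasDerivAt (fun τ : ℝ => Real.exp (s * (τ - y)))
          (Real.exp (s * (t₀ - y)) * s) t₀ := h2.exp
      have h4 := ((h3.sub_const (Real.exp (s * (t₀ - y)))).const_mul K).const_add (f t₀)
      have h5 := (hasDerivAt_const t₀ (f t₀)).add h1
      have h6 := h5.add ((h3.sub_const (Real.exp (s * (t₀ - y)))).const_mul K)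
      have h7 : ψ = ((fun _ => f t₀) + fun τ => m * (τ - t₀)) +
          fun τ => K * (Real.exp (s * (τ - y)) - Real.exp (s * (t₀ - y))) := rfl
      rw [h7]
      simpa using h6
    have ht0ab : t₀ ∈ Ioo a b := ⟨lt_of_le_of_lt hx.1 ht0x, ht0b⟩
    have := hsup t₀ ht0ab ψ hψc hψt hloc
    rw [hderiv.deriv] at this
    have hpos : 0 < m + K * (Real.exp (s * (t₀ - y)) * s) := by positivity
    linarith
  -- conclude antitone, handling y = b by continuity
  intro x hx y hy hxy
  rcases eq_or_lt_of_le hxy with rfl | hxy'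
  · exact le_refl _
  rcases lt_or_eq_of_le hy.2 with hyb | hyb
  · exact key x hx y hy hxy' hyb
  · subst hyb
    -- f y = f b ≤ f x via continuity from the left
    have hxb : x < y := hxy'
    have hne : (nhdsWithin y (Ioo x y)).NeBot := right_nhdsWithin_Ioo_neBot hxb
    have htend : Tendsto f (nhdsWithin y (Ioo x y)) (nhds (f y)) := by
      have := (hf y hy).mono (show Ioo x y ⊆ Icc a y from fun t ht =>
        ⟨le_trans hx.1 ht.1.le, ht.2.le⟩)
      exact this
    apply le_of_tendsto htend
    filter_upwards [self_mem_nhdsWithin] with t ht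
    exact key x hx t ⟨le_trans hx.1 ht.1.le, ht.2.le⟩ ht.1 ht.2
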